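/- arXiv:2601.17881 — 10 statements merged into one kernel-verified Lean document; each statement's English description precedes it below -/
import Mathlib

section
/- For any triangle with side lengths a, b, c (positive reals satisfying the triangle inequality), there exists a unique real u with 0 < u < min(a, b, c) such that u^3 = (a-u)(b-u)(c-u). -/
theorem yff_parameter_exists_unique (a b c : ℝ)
    (ha : 0 < a) (hb : 0 < b) (hc : 0 < c)
    (hab : a < b + c) (hbc : b < a + c) (hca : c < a + b) :
    ∃! u : ℝ, 0 < u ∧ u < min a (min b c) ∧
      u ^ 3 = (a - u) * (b - u) * (c - u) := by
  set m := min a (min b c) with hm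
  have hm0 : 0 < m := lt_min ha (lt_min hb hc)
  set f : ℝ → ℝ := fun u => u ^ 3 - (a - u) * (b - u) * (c - u) with hf
  have h6p : 0 < 6 * (a * b + b * c + a * c) - (a + b + c) ^ 2 := by
    nlinarith [mul_pos ha (sub_pos.2 hab), mul_pos hb (sub_pos.2 hbc),
      mul_pos hc (sub_pos.2 hca)]
  have hmono : StrictMono f := by
    intro x y hxy
    have h1 : 0 < y - x := sub_pos.2 hxy
    simp only [hf]
    nlinarith [sq_nonneg (x - y), sq_nonneg (3 * (x + y) - (a + b + c)),
      mul_pos h1 h6p, mul_pos h1 (mul_pos h1 h1),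
      mul_nonneg h1.le (sq_nonneg (x - y)),
      mul_nonneg h1.le (sq_nonneg (3 * (x + y) - (a + b + c)))]
  have hcont : Continuous f := by
    simp only [hf]; continuity
  have hf0 : f 0 < 0 := by
    simp only [hf]
    nlinarith [mul_pos (mul_pos ha hb) hc]
  have hfm : 0 < f m := by
    have : (a - m) * (b - m) * (c - m) = 0 := by
      rcases le_total a (min b c) with h | h
      · rw [hm, min_eq_left h, sub_self, zero_mul, zero_mul]
      · rcases le_total b c with h2 | h2
        · rw [hm, min_eq_right h, min_eq_left h2, sub_self, mul_zero, zero_mul]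
        · rw [hm, min_eq_right h, min_eq_right h2, sub_self, mul_zero]
    simp only [hf, this, sub_zero]
    positivity
  have hsub : Set.Ioo (f 0) (f m) ⊆ f '' Set.Ioo 0 m :=
    intermediate_value_Ioo hm0.le hcont.continuousOn
  obtain ⟨u, hu, hfu⟩ := hsub ⟨hf0, hfm⟩
  refine ⟨u, ⟨hu.1, hu.2, by have := hfu; simp only [hf] at this; linarith⟩, ?_⟩
  rintro v ⟨hv0, hvm, hveq⟩
  apply hmono.injective
  have : f v = 0 := by simp only [hf]; linarith
  rw [this, hfu]
end

section
/- Let a, b, c be positive reals (sides of a triangle) and u a real with 0 < u < min(a,b,c) satisfying u^3 = (a-u)(b-u)(c-u). If u = b/2, then b(ab - 2ac + bc) = 0, hence b = 2ac/(a+c), i.e., b is the harmonic mean of a and c. -/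
theorem yff_half_b_implies_harmonic (a b c u : ℝ)
    (ha : 0 < a) (hb : 0 < b) (hc : 0 < c)
    (hu0 : 0 < u) (hu1 : u < min a (min b c))
    (hyff : u ^ 3 = (a - u) * (b - u) * (c - u))
    (hub : u = b / 2) :
    b * (a * b - 2 * a * c + b * c) = 0 ∧ b = 2 * a * c / (a + c) := by
  subst hub
  have h2 : b * b * (a * b - 2 * a * c + b * c) = 0 := by ring_nf; nlinarith [hyff]
  have hkey : a * b - 2 * a * c + b * c = 0 := by
    have hb2 : b * b ≠ 0 := by positivity
    exact (mul_eq_zero.mp h2).resolve_left hb2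
  constructor
  · rw [hkey]; ring
  · field_simp
    linarith [hkey]
end

section
/- Let a, b, c be the sides of a triangle and u the Yff parameter satisfying u^3 = (a-u)(b-u)(c-u) with 0 < u < min(a,b,c). If b = 2ac/(a+c) (the triangle is harmonic), then u = b/2. -/
theorem harmonic_implies_yff_half_b (a b c u : ℝ)
    (ha : 0 < a) (hb : 0 < b) (hc : 0 < c)
    (hu0 : 0 < u) (hu1 : u < min a (min b c))
    (hyff : u ^ 3 = (a - u) * (b - u) * (c - u))
    (hharm : b = 2 * a * c / (a + c)) :
    u = b / 2 := by
  have hac : (0:ℝ) < a + c := by linarith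
  have hb' : b * (a + c) = 2 * a * c := by
    rw [hharm]; field_simp
  have hua : u < a := lt_of_lt_of_le hu1 (min_le_left _ _)
  have huc : u < c := lt_of_lt_of_le hu1 ((min_le_right _ _).trans (min_le_right _ _))
  have hg : (a - u) * (c - u) + (a + c) * u / 2 > 0 := by
    have h1 : 0 < (a - u) * (c - u) := mul_pos (by linarith) (by linarith)
    have h2 : 0 < (a + c) * u / 2 := by positivity
    linarith
  have key : (2 * u - b) * ((a - u) * (c - u) + (a + c) * u / 2) = 0 := by
    linear_combination hyff - (u / 2) * hb'
  have h2ub : 2 * u - b = 0 := by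
    rcases mul_eq_zero.mp key with h | h
    · exact h
    · linarith
  linarith
end

section
/- The Yff points Y1 = (u^2 : (a-u)(b-u) : u(b-u)), Y2 = ((a-u)(b-u) : u^2 : u(a-u)) and the centroid X2 = (1:1:1) are collinear if and only if (a - 2u)(b - 2u)(bu - ab + au) = 0. -/
theorem yff_collinear_centroid (a b c u : ℝ) :
    Matrix.det !![u ^ 2, (a - u) * (b - u), u * (b - u);
        (a - u) * (b - u), u ^ 2, u * (a - u);
        1, 1, 1] = 0 ↔
      (a - 2 * u) * (b - 2 * u) * (b * u - a * b + a * u) = 0 := by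
  have key : Matrix.det !![u ^ 2, (a - u) * (b - u), u * (b - u);
      (a - u) * (b - u), u ^ 2, u * (a - u); 1, 1, 1]
      = (a - 2 * u) * (b - 2 * u) * (b * u - a * b + a * u) := by
    rw [Matrix.det_fin_three]
    norm_num [Matrix.cons_val_zero, Matrix.cons_val_one, Matrix.head_cons,
      Matrix.cons_val_two, Matrix.tail_cons]
    ring
  rw [key]
end

section
/- Let P = (p:q:r) be a point in homogeneous barycentric coordinates with respect to triangle ABC with side lengths a, b, c, normalized so p + q + r ≠ 0. Then the reflection of P about line BC has barycentric coordinates (-a^2 p : (b^2 - c^2) p + (p + q) a^2 : (c^2 - b^2) p + (p + r) a^2). -/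
open EuclideanGeometry

open scoped RealInnerProductSpace

lemma reflection_eq_of_mem_of_orth {V P : Type*} [NormedAddCommGroup V] [InnerProductSpace ℝ V]
    [MetricSpace P] [NormedAddTorsor V P] (s : AffineSubspace ℝ P) [Nonempty s]
    [Submodule.HasOrthogonalProjection s.direction] (x q : P) (hq : q ∈ s)
    (ho : q -ᵥ x ∈ s.directionᗮ) :
    reflection s x = (q -ᵥ x) +ᵥ q := by
  have hproj : (EuclideanGeometry.orthogonalProjection s x : P) = q := by
    have : q ∈ (s : Set P) ∩ AffineSubspace.mk' x s.directionᗮ :=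
      ⟨hq, AffineSubspace.mem_mk'.2 ho⟩
    rw [inter_eq_singleton_orthogonalProjection] at this
    exact this.symm
  rw [EuclideanGeometry.reflection_apply', hproj]

theorem barycentric_reflection_about_BC (A B C : EuclideanSpace ℝ (Fin 2))
    (hABC : AffineIndependent ℝ ![A, B, C])
    (a b c : ℝ) (ha : a = dist B C) (hb : b = dist C A) (hc : c = dist A B)
    (p q r : ℝ) (hpqr : p + q + r ≠ 0) :
    haveI : Nonempty (affineSpan ℝ ({B, C} : Set (EuclideanSpace ℝ (Fin 2)))) :=
      ⟨⟨B, subset_affineSpan ℝ _ (by simp)⟩⟩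
    reflection (affineSpan ℝ ({B, C} : Set (EuclideanSpace ℝ (Fin 2))))
        ((p + q + r)⁻¹ • (p • A + q • B + r • C)) =
      ((-a ^ 2 * p) + ((b ^ 2 - c ^ 2) * p + (p + q) * a ^ 2)
          + ((c ^ 2 - b ^ 2) * p + (p + r) * a ^ 2))⁻¹ •
        ((-a ^ 2 * p) • A + ((b ^ 2 - c ^ 2) * p + (p + q) * a ^ 2) • B
          + ((c ^ 2 - b ^ 2) * p + (p + r) * a ^ 2) • C) := by
  haveI : Nonempty (affineSpan ℝ ({B, C} : Set (EuclideanSpace ℝ (Fin 2)))) :=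
    ⟨⟨B, subset_affineSpan ℝ _ (by simp)⟩⟩
  have hBC : B ≠ C := by
    intro h
    have := hABC.injective (show ![A, B, C] 1 = ![A, B, C] 2 by simpa using h)
    simp at this
  set σ := p + q + r with hσ
  have haa : a ^ 2 = ⟪C - B, C - B⟫ := by
    rw [real_inner_self_eq_norm_sq, ha, dist_eq_norm, ← norm_neg]
    ring_nf
    rw [neg_sub]
  have ha0 : a ≠ 0 := by
    rw [ha]
    exact dist_ne_zero.2 hBC
  set I : ℝ := ⟪A - B, C - B⟫ with hI
  have hbc2 : b ^ 2 = c ^ 2 - 2 * I + a ^ 2 := by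
    have : A - C = (A - B) - (C - B) := by abel
    rw [hb, hc, dist_eq_norm, dist_eq_norm, ← norm_neg (C - A), neg_sub, this, haa, hI]
    rw [← real_inner_self_eq_norm_sq, ← real_inner_self_eq_norm_sq]
    simp only [inner_sub_sub_self]
    rw [real_inner_comm (C - B) (A - B)]
    ring
  set t : ℝ := (p * I + r * a ^ 2) / (σ * a ^ 2) with ht
  set x : EuclideanSpace ℝ (Fin 2) := σ⁻¹ • (p • A + q • B + r • C) with hx
  set Q : EuclideanSpace ℝ (Fin 2) := t • (C - B) + B with hQ
  set s : AffineSubspace ℝ (EuclideanSpace ℝ (Fin 2)) :=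
    affineSpan ℝ ({B, C} : Set (EuclideanSpace ℝ (Fin 2))) with hs
  have hdir : s.direction = ℝ ∙ (B - C) := by
    rw [hs, direction_affineSpan, vectorSpan_pair]
    rfl
  have hQmem : Q ∈ s := by
    have : Q = (t • (C - B)) +ᵥ B := rfl
    rw [this]
    refine AffineSubspace.vadd_mem_of_mem_direction ?_
      (subset_affineSpan ℝ _ (by simp))
    rw [hdir, Submodule.mem_span_singleton]
    exact ⟨-t, by rw [neg_smul, ← smul_neg, neg_sub]⟩
  have horth : Q -ᵥ x ∈ s.directionᗮ := by
    rw [hdir]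
    have : (ℝ ∙ (B - C)) = ℝ ∙ (C - B) := by
      rw [show B - C = (-1 : ℝ) • (C - B) by simp [neg_sub], Submodule.span_singleton_smul_eq]
      exact Ne.isUnit (by norm_num)
    rw [this, Submodule.mem_orthogonal_singleton_iff_inner_right]
    have hxB : Q -ᵥ x = (t - σ⁻¹ * r) • (C - B) - (σ⁻¹ * p) • (A - B) := by
      show Q - x = _
      rw [hQ, hx]
      have h1 : σ⁻¹ • (p • A + q • B + r • C)
          = (σ⁻¹ * p) • A + (σ⁻¹ * q) • B + (σ⁻¹ * r) • C := by
        module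
      rw [h1]
      have hq' : σ⁻¹ * q = 1 - σ⁻¹ * p - σ⁻¹ * r := by
        field_simp
        ring
      rw [hq']
      module
    have hIc : ⟪C - B, A - B⟫ = I := (real_inner_comm _ _).trans hI.symm
    rw [hxB, inner_sub_right, inner_smul_right, inner_smul_right, ← haa, hIc, ht]
    have hden : σ * a ^ 2 ≠ 0 := mul_ne_zero hpqr (pow_ne_zero 2 ha0)
    field_simp
    ring
  have href := reflection_eq_of_mem_of_orth s x Q hQmem horth
  have hgoal : (EuclideanGeometry.reflection
      (affineSpan ℝ ({B, C} : Set (EuclideanSpace ℝ (Fin 2))))) x = (Q -ᵥ x) +ᵥ Q := href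
  rw [hgoal]
  show (Q - x) + Q = _
  have hcoef : (-a ^ 2 * p) + ((b ^ 2 - c ^ 2) * p + (p + q) * a ^ 2)
      + ((c ^ 2 - b ^ 2) * p + (p + r) * a ^ 2) = σ * a ^ 2 := by ring
  rw [hcoef]
  have hb2 : b ^ 2 - c ^ 2 = a ^ 2 - 2 * I := by rw [hbc2]; ring
  have hc2 : c ^ 2 - b ^ 2 = 2 * I - a ^ 2 := by rw [hbc2]; ring
  rw [hb2, hc2, hQ, hx, ht]
  have hden : σ * a ^ 2 ≠ 0 := mul_ne_zero hpqr (pow_ne_zero 2 ha0)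
  have ha2 : a ^ 2 ≠ 0 := pow_ne_zero 2 ha0
  match_scalars <;> field_simp <;> ring
end

section
/- In a triangle with angle A = 2·(angle B), the side lengths satisfy a^2 = b(b + c). -/
open EuclideanGeometry

theorem double_angle_side_relation (A B C : EuclideanSpace ℝ (Fin 2))
    (hABC : AffineIndependent ℝ ![A, B, C])
    (hangle : ∠ B A C = 2 * ∠ A B C) :
    dist B C ^ 2 = dist C A * (dist C A + dist A B) := by
  have hnc : ¬Collinear ℝ ({A, B, C} : Set _) :=
    affineIndependent_iff_not_collinear_set.mp hABC
  have hAB : A ≠ B := fun h => hnc (by rw [h]; exact (collinear_pair ℝ B C).subset (by simp))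
  have hAC : A ≠ C := fun h => hnc (by rw [h]; exact (collinear_pair ℝ C B).subset (by
    intro x hx; simp at hx; rcases hx with h|h|h <;> simp [h]))
  have hBC : B ≠ C := fun h => hnc (by rw [h]; exact (collinear_pair ℝ A C).subset (by
    intro x hx; simp at hx; rcases hx with h|h|h <;> simp [h]))
  set a := dist B C with ha
  set b := dist C A with hb
  set c := dist A B with hc
  have hapos : 0 < a := dist_pos.mpr hBC
  have hbpos : 0 < b := dist_pos.mpr hAC.symm
  have hcpos : 0 < c := dist_pos.mpr hAB
  set α := ∠ B A C with hα
  set β := ∠ A B C with hβ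
  -- sin β > 0
  have hsinβ : 0 < Real.sin β := sin_pos_of_not_collinear hnc
  have hsinα : 0 ≤ Real.sin α :=
    Real.sin_nonneg_of_nonneg_of_le_pi (angle_nonneg _ _ _) (angle_le_pi _ _ _)
  -- law of cosines at A and B
  have lawA := EuclideanGeometry.law_cos B A C
  have lawB := EuclideanGeometry.law_cos A B C
  rw [dist_comm B A] at lawA
  rw [dist_comm A C, dist_comm C B] at lawB
  have hcosα : 2*c*b*Real.cos α = c^2 + b^2 - a^2 := by nlinarith [lawA]
  have hcosβ : 2*c*a*Real.cos β = c^2 + a^2 - b^2 := by nlinarith [lawB]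
  -- law of sines: a * sin β = b * sin α
  have hsq : (2*c*(a * Real.sin β))^2 = (2*c*(b * Real.sin α))^2 := by
    have h1 : Real.sin β ^ 2 = 1 - Real.cos β ^ 2 := by
      have := Real.sin_sq_add_cos_sq β; linarith
    have h2 : Real.sin α ^ 2 = 1 - Real.cos α ^ 2 := by
      have := Real.sin_sq_add_cos_sq α; linarith
    linear_combination (4*c^2*a^2)*h1 - (4*c^2*b^2)*h2 -
      (2*c*a*Real.cos β + (c^2+a^2-b^2))*hcosβ + (2*c*b*Real.cos α + (c^2+b^2-a^2))*hcosα
  have hsin : a * Real.sin β = b * Real.sin α := by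
    have h1 : (0:ℝ) ≤ 2*c*(a * Real.sin β) :=
      mul_nonneg (by linarith) (mul_nonneg hapos.le hsinβ.le)
    have h2 : (0:ℝ) ≤ 2*c*(b * Real.sin α) :=
      mul_nonneg (by linarith) (mul_nonneg hbpos.le hsinα)
    have h3 := (pow_left_inj₀ h1 h2 two_ne_zero).mp hsq
    have hc2 : (0:ℝ) < 2*c := by linarith
    exact mul_left_cancel₀ (ne_of_gt hc2) h3
  -- a = 2 b cos β
  have hdouble : a = 2 * b * Real.cos β := by
    rw [hangle, Real.sin_two_mul] at hsin
    have : Real.sin β * (a - 2 * b * Real.cos β) = 0 := by linear_combination hsin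
    rcases mul_eq_zero.mp this with h | h
    · exact absurd h (ne_of_gt hsinβ)
    · linarith
  -- cos α = 2 cos²β - 1
  have hcos2 : Real.cos α = 2 * Real.cos β ^ 2 - 1 := by
    rw [hangle]; exact Real.cos_two_mul β
  -- combine
  have key : 2*c*b*(2 * Real.cos β ^ 2 - 1) = c^2 + b^2 - a^2 := by
    rw [← hcos2]; exact hcosα
  have hcosval : 2 * b * Real.cos β = a := hdouble.symm
  -- from hcosval : cos β = a/(2b); plug in
  have hsq2 : 4*b^2*Real.cos β^2 = a^2 := by
    linear_combination (2*b*Real.cos β + a) * hcosval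
  have hmain : a^2 * (b + c) = b * (b+c)^2 := by
    linear_combination b*key - c*hsq2
  have hbc : (0:ℝ) < b + c := by linarith
  have := mul_right_cancel₀ (ne_of_gt hbc) (by linear_combination hmain :
    a^2 * (b+c) = (b*(b+c)) * (b+c))
  linarith
end

section
/- Conversely, if a triangle with sides a, b, c satisfies a^2 = b(b + c), then angle A = 2·(angle B). -/
open EuclideanGeometry

theorem side_relation_implies_double_angle (A B C : EuclideanSpace ℝ (Fin 2))
    (hABC : AffineIndependent ℝ ![A, B, C])
    (hside : dist B C ^ 2 = dist C A * (dist C A + dist A B)) :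
    ∠ B A C = 2 * ∠ A B C := by
  have hAB : A ≠ B := hABC.injective.ne (by decide : (0 : Fin 3) ≠ 1)
  have hAC : A ≠ C := hABC.injective.ne (by decide : (0 : Fin 3) ≠ 2)
  have hBC : B ≠ C := hABC.injective.ne (by decide : (1 : Fin 3) ≠ 2)
  set a := dist B C with ha
  set b := dist C A with hb
  set c := dist A B with hc
  have hapos : 0 < a := dist_pos.mpr hBC
  have hbpos : 0 < b := dist_pos.mpr (Ne.symm hAC)
  have hcpos : 0 < c := dist_pos.mpr hAB
  -- law of cosines at B
  have lcB := EuclideanGeometry.law_cos C B A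
  have lcA := EuclideanGeometry.law_cos B A C
  have d2 : dist C B = a := dist_comm C B
  have d3 : dist B A = c := dist_comm B A
  rw [← hb, ← hc, d2] at lcB
  rw [← ha, ← hb, d3] at lcA
  rw [EuclideanGeometry.angle_comm C B A] at lcB
  -- cos B = (b+c)/(2a), cos A = (c-b)/(2b)
  have hcosB : Real.cos (∠ A B C) = (b + c) / (2 * a) := by
    field_simp
    nlinarith [lcB, hside]
  have hcosA : Real.cos (∠ B A C) = (c - b) / (2 * b) := by
    field_simp
    nlinarith [lcA, hside]
  have hBle : ∠ A B C < Real.pi / 2 := by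
    by_contra h
    push_neg at h
    have : Real.cos (∠ A B C) ≤ 0 := by
      rcases eq_or_lt_of_le h with h' | h'
      · rw [← h', Real.cos_pi_div_two]
      · exact le_of_lt (Real.cos_neg_of_pi_div_two_lt_of_lt h'
          (lt_of_le_of_lt (EuclideanGeometry.angle_le_pi A B C)
            (by linarith [Real.pi_pos])))
    rw [hcosB] at this
    have : 0 < (b + c) / (2 * a) := by positivity
    linarith
  have hkey : Real.cos (∠ B A C) = Real.cos (2 * ∠ A B C) := by
    rw [Real.cos_two_mul, hcosA, hcosB]
    field_simp
    nlinarith [hside]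
  exact Real.injOn_cos
    ⟨EuclideanGeometry.angle_nonneg B A C, EuclideanGeometry.angle_le_pi B A C⟩
    ⟨by linarith [EuclideanGeometry.angle_nonneg A B C], by linarith⟩ hkey
end

section
/- Let triangle ABC have sides a, b, c, area K, and circumradius R = abc/(4K). Let u be the Yff parameter (u^3 = (a-u)(b-u)(c-u), 0 < u < min(a,b,c)), and let D on BC, E on CA, F on AB satisfy BD = u, CE = u, AF = u. Then the area of triangle DEF equals u^3/(2R). -/
open MeasureTheory

section Aux
open Set Pointwise


lemma vol_tri_prod :
    volume {p : ℝ × ℝ | 0 ≤ p.1 ∧ 0 ≤ p.2 ∧ p.1 + p.2 ≤ 1} = ENNReal.ofReal (1/2) := by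
  have hs : MeasurableSet {p : ℝ × ℝ | 0 ≤ p.1 ∧ 0 ≤ p.2 ∧ p.1 + p.2 ≤ 1} := by
    apply MeasurableSet.inter
    · exact measurableSet_le measurable_const measurable_fst
    apply MeasurableSet.inter
    · exact measurableSet_le measurable_const measurable_snd
    · exact measurableSet_le (measurable_fst.add measurable_snd) measurable_const
  rw [Measure.volume_eq_prod, Measure.prod_apply hs]
  have hslice : (fun x : ℝ => volume (Prod.mk x ⁻¹' {p : ℝ × ℝ | 0 ≤ p.1 ∧ 0 ≤ p.2 ∧ p.1 + p.2 ≤ 1}))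
      = fun x => (Icc (0:ℝ) 1).indicator (fun x => ENNReal.ofReal (1 - x)) x := by
    funext x
    by_cases hx : x ∈ Icc (0:ℝ) 1
    · have : Prod.mk x ⁻¹' {p : ℝ × ℝ | 0 ≤ p.1 ∧ 0 ≤ p.2 ∧ p.1 + p.2 ≤ 1} = Icc 0 (1 - x) := by
        ext y; simp only [mem_preimage, mem_setOf_eq, mem_Icc]
        constructor
        · rintro ⟨_, h2, h3⟩; exact ⟨h2, by linarith⟩
        · rintro ⟨h2, h3⟩; exact ⟨hx.1, h2, by linarith⟩
      rw [this, Real.volume_Icc, indicator_of_mem hx]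
      norm_num
    · have : Prod.mk x ⁻¹' {p : ℝ × ℝ | 0 ≤ p.1 ∧ 0 ≤ p.2 ∧ p.1 + p.2 ≤ 1} = ∅ := by
        ext y; simp only [mem_preimage, mem_setOf_eq, mem_empty_iff_false, iff_false]
        rintro ⟨h1, h2, h3⟩
        simp only [mem_Icc, not_and, not_le] at hx
        nlinarith [hx h1]
      rw [this, indicator_of_notMem hx]
      simp
  rw [hslice, lintegral_indicator measurableSet_Icc]
  rw [← ofReal_integral_eq_lintegral_ofReal]
  · have : ∫ x in Icc (0:ℝ) 1, (1 - x) = 1/2 := by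
      rw [integral_Icc_eq_integral_Ioc, ← intervalIntegral.integral_of_le (by norm_num : (0:ℝ) ≤ 1)]
      simp [intervalIntegral.integral_sub intervalIntegrable_const intervalIntegral.intervalIntegrable_id]
      norm_num
    rw [this]
  · exact (continuous_const.sub continuous_id).integrableOn_Icc
  · filter_upwards [self_mem_ae_restrict measurableSet_Icc] with x hx
    simp only [mem_Icc] at hx
    simp only [Pi.zero_apply]
    linarith [hx.2]

noncomputable abbrev s0 : EuclideanSpace ℝ (Fin 2) := EuclideanSpace.single 0 1
noncomputable abbrev s1 : EuclideanSpace ℝ (Fin 2) := EuclideanSpace.single 1 1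

lemma hull_eq_tri :
    convexHull ℝ ({0, s0, s1} : Set (EuclideanSpace ℝ (Fin 2)))
      = {x : EuclideanSpace ℝ (Fin 2) | 0 ≤ x 0 ∧ 0 ≤ x 1 ∧ x 0 + x 1 ≤ 1} := by
  apply le_antisymm
  · apply convexHull_min
    · rintro x (rfl | rfl | rfl) <;>
        simp [EuclideanSpace.single_apply]
    · intro x hx y hy α β hα hβ hαβ
      simp only [mem_setOf_eq, PiLp.add_apply, PiLp.smul_apply, smul_eq_mul] at *
      refine ⟨by nlinarith [hx.1, hy.1], by nlinarith [hx.2.1, hy.2.1], by nlinarith [hx.2.2, hy.2.2]⟩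
  · intro x hx
    obtain ⟨h0, h1, hs⟩ := hx
    have hx_eq : x = (1 - x 0 - x 1) • (0 : EuclideanSpace ℝ (Fin 2)) + x 0 • s0 + x 1 • s1 := by
      refine (PiLp.ext fun j => ?_)
      fin_cases j <;>
        simp [EuclideanSpace.single_apply, PiLp.add_apply, PiLp.smul_apply]
    have hx_eq2 : x = ∑ i : Fin 3, (![1 - x 0 - x 1, x 0, x 1] i) • (![0, s0, s1] i : EuclideanSpace ℝ (Fin 2)) := by
      rw [hx_eq]; simp [Fin.sum_univ_three]
    rw [hx_eq2]
    have hc := convex_convexHull ℝ ({0, s0, s1} : Set (EuclideanSpace ℝ (Fin 2)))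
    have m0 : (0 : EuclideanSpace ℝ (Fin 2)) ∈ convexHull ℝ ({0, s0, s1} : Set (EuclideanSpace ℝ (Fin 2))) :=
      subset_convexHull ℝ _ (by simp)
    have m1 : s0 ∈ convexHull ℝ ({0, s0, s1} : Set (EuclideanSpace ℝ (Fin 2))) :=
      subset_convexHull ℝ _ (by simp)
    have m2 : s1 ∈ convexHull ℝ ({0, s0, s1} : Set (EuclideanSpace ℝ (Fin 2))) :=
      subset_convexHull ℝ _ (by simp)
    apply hc.sum_mem
    · intro i _
      fin_cases i <;> simp <;> linarith
    · simp [Fin.sum_univ_three]; ring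
    · intro i _
      fin_cases i <;> simp [m0, m1, m2]

lemma vol_tri_euc :
    volume {x : EuclideanSpace ℝ (Fin 2) | 0 ≤ x 0 ∧ 0 ≤ x 1 ∧ x 0 + x 1 ≤ 1}
      = ENNReal.ofReal (1/2) := by
  have hmp := (volume_preserving_finTwoArrow ℝ).comp
    (EuclideanSpace.volume_preserving_symm_measurableEquiv_toLp (Fin 2))
  have hs : MeasurableSet {p : ℝ × ℝ | 0 ≤ p.1 ∧ 0 ≤ p.2 ∧ p.1 + p.2 ≤ 1} := by
    apply MeasurableSet.inter
    · exact measurableSet_le measurable_const measurable_fst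
    apply MeasurableSet.inter
    · exact measurableSet_le measurable_const measurable_snd
    · exact measurableSet_le (measurable_fst.add measurable_snd) measurable_const
  have himg : (fun x : EuclideanSpace ℝ (Fin 2) => (MeasurableEquiv.finTwoArrow ((MeasurableEquiv.toLp 2 (Fin 2 → ℝ)).symm x))) ⁻¹'
      {p : ℝ × ℝ | 0 ≤ p.1 ∧ 0 ≤ p.2 ∧ p.1 + p.2 ≤ 1}
      = {x : EuclideanSpace ℝ (Fin 2) | 0 ≤ x 0 ∧ 0 ≤ x 1 ∧ x 0 + x 1 ≤ 1} := by
    ext x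
    simp [MeasurableEquiv.finTwoArrow]
  calc volume {x : EuclideanSpace ℝ (Fin 2) | 0 ≤ x 0 ∧ 0 ≤ x 1 ∧ x 0 + x 1 ≤ 1}
      = volume {p : ℝ × ℝ | 0 ≤ p.1 ∧ 0 ≤ p.2 ∧ p.1 + p.2 ≤ 1} := by
        rw [← himg]
        exact hmp.measure_preimage hs.nullMeasurableSet
    _ = ENNReal.ofReal (1/2) := vol_tri_prod


end Aux

/-- Area of the triangle with the given vertices in the Euclidean plane. -/
noncomputable def triArea (X Y Z : EuclideanSpace ℝ (Fin 2)) : ℝ :=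
  (volume (convexHull ℝ ({X, Y, Z} : Set (EuclideanSpace ℝ (Fin 2))))).toReal

section Aux2
open Set Pointwise

lemma triArea_formula (X Y Z : EuclideanSpace ℝ (Fin 2)) :
    triArea X Y Z = |(Y 0 - X 0) * (Z 1 - X 1) - (Y 1 - X 1) * (Z 0 - X 0)| / 2 := by
  set v : EuclideanSpace ℝ (Fin 2) := Y - X with hv
  set w : EuclideanSpace ℝ (Fin 2) := Z - X with hw
  set M : Matrix (Fin 2) (Fin 2) ℝ := !![v 0, w 0; v 1, w 1] with hM
  set f : EuclideanSpace ℝ (Fin 2) →ₗ[ℝ] EuclideanSpace ℝ (Fin 2) := Matrix.toEuclideanLin M with hf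
  have hfs0 : f s0 = v := by
    rw [hf, Matrix.toEuclideanLin_apply]
    refine PiLp.ext fun j => ?_
    fin_cases j <;>
      simp [hM, Matrix.mulVec, EuclideanSpace.single_apply, Fin.sum_univ_two, dotProduct]
  have hfs1 : f s1 = w := by
    rw [hf, Matrix.toEuclideanLin_apply]
    refine PiLp.ext fun j => ?_
    fin_cases j <;>
      simp [hM, Matrix.mulVec, EuclideanSpace.single_apply, Fin.sum_univ_two, dotProduct]
  have hdet : LinearMap.det f = M.det := by
    have h0 : f = (WithLp.linearEquiv 2 ℝ (Fin 2 → ℝ)).symm.toLinearMap ∘ₗ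
        (Matrix.toLin' M) ∘ₗ (WithLp.linearEquiv 2 ℝ (Fin 2 → ℝ)).toLinearMap := rfl
    rw [h0]
    have h := LinearMap.det_conj (Matrix.toLin' M) (WithLp.linearEquiv 2 ℝ (Fin 2 → ℝ)).symm
    simp only [LinearEquiv.symm_symm] at h
    rw [h, LinearMap.det_toLin']
  have hfimg : ⇑f '' (convexHull ℝ ({0, s0, s1} : Set (EuclideanSpace ℝ (Fin 2))))
      = convexHull ℝ (⇑f '' ({0, s0, s1} : Set (EuclideanSpace ℝ (Fin 2)))) := by
    rw [← LinearMap.coe_toAffineMap]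
    exact f.toAffineMap.image_convexHull _
  have himg : ({X, Y, Z} : Set (EuclideanSpace ℝ (Fin 2))) = X +ᵥ (⇑f '' ({0, s0, s1} : Set (EuclideanSpace ℝ (Fin 2)))) := by
    rw [← Set.image_vadd]
    simp only [Set.image_insert_eq, Set.image_singleton, hfs0, hfs1, map_zero, vadd_eq_add, hv, hw,
      add_zero, add_sub_cancel]
  have hhull : convexHull ℝ ({X, Y, Z} : Set (EuclideanSpace ℝ (Fin 2)))
      = X +ᵥ (⇑f '' (convexHull ℝ ({0, s0, s1} : Set (EuclideanSpace ℝ (Fin 2))))) := by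
    rw [himg, convexHull_vadd, hfimg]
  rw [triArea, hhull, measure_vadd, Measure.addHaar_image_linearMap, hull_eq_tri, vol_tri_euc, hdet]
  have hd : M.det = (Y 0 - X 0) * (Z 1 - X 1) - (Y 1 - X 1) * (Z 0 - X 0) := by
    rw [hM, Matrix.det_fin_two_of, hv, hw]
    simp only [PiLp.sub_apply]
    ring
  rw [hd, ENNReal.toReal_mul, ENNReal.toReal_ofReal (abs_nonneg _), ENNReal.toReal_ofReal (by norm_num)]
  ring

lemma seg_param (P Q X : EuclideanSpace ℝ (Fin 2)) (hX : X ∈ segment ℝ P Q)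
    (u L : ℝ) (hL : 0 < L) (hLd : dist P Q = L) (hd : dist P X = u) :
    ∀ i, X i = (1 - u / L) * P i + (u / L) * Q i := by
  obtain ⟨α, β, hα, hβ, hαβ, rfl⟩ := hX
  have hsub : P - (α • P + β • Q) = β • (P - Q) := by
    rw [show α = 1 - β by linarith]
    rw [smul_sub, sub_smul, one_smul]
    abel
  have hdist : dist P (α • P + β • Q) = β * L := by
    rw [dist_eq_norm, hsub, norm_smul, Real.norm_eq_abs, abs_of_nonneg hβ, ← dist_eq_norm, hLd]
  have hβu : β = u / L := by
    rw [hdist] at hd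
    field_simp
    linarith
  intro i
  have : (α • P + β • Q) i = α * P i + β * Q i := rfl
  rw [this, hβu, show α = 1 - β by linarith, hβu]

theorem yff_cevian_triangle_area (A B C D E F : EuclideanSpace ℝ (Fin 2))
    (hABC : AffineIndependent ℝ ![A, B, C])
    (a b c u K R : ℝ)
    (ha : a = dist B C) (hb : b = dist C A) (hc : c = dist A B)
    (hK : K = triArea A B C) (hR : R = a * b * c / (4 * K))
    (hu0 : 0 < u) (hu1 : u < min a (min b c))
    (hyff : u ^ 3 = (a - u) * (b - u) * (c - u))
    (hD : D ∈ segment ℝ B C) (hE : E ∈ segment ℝ C A) (hF : F ∈ segment ℝ A B)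
    (hBD : dist B D = u) (hCE : dist C E = u) (hAF : dist A F = u) :
    triArea D E F = u ^ 3 / (2 * R) := by
  have ha0 : 0 < a := lt_trans hu0 (lt_of_lt_of_le hu1 (min_le_left _ _))
  have hb0 : 0 < b := lt_trans hu0 (lt_of_lt_of_le hu1 (le_trans (min_le_right _ _) (min_le_left _ _)))
  have hc0 : 0 < c := lt_trans hu0 (lt_of_lt_of_le hu1 (le_trans (min_le_right _ _) (min_le_right _ _)))
  have hDi := seg_param B C D hD u a ha0 ha.symm hBD
  have hEi := seg_param C A E hE u b hb0 hb.symm hCE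
  have hFi := seg_param A B F hF u c hc0 hc.symm hAF
  set p := u / a with hp
  set q := u / b with hq
  set r := u / c with hr
  set g : ℝ := (1 - p) * (1 - q) * (1 - r) + p * q * r with hg
  have habc : a * b * c * g = 2 * u ^ 3 := by
    have : a * b * c * g = (a - u) * (b - u) * (c - u) + u ^ 3 := by
      rw [hg, hp, hq, hr]
      field_simp
    rw [this, ← hyff]
    ring
  have hgval : g = 2 * u ^ 3 / (a * b * c) := by
    field_simp at habc ⊢
    linarith
  have hgpos : 0 ≤ g := by
    rw [hgval]
    positivity
  have key : (E 0 - D 0) * (F 1 - D 1) - (E 1 - D 1) * (F 0 - D 0)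
      = g * ((B 0 - A 0) * (C 1 - A 1) - (B 1 - A 1) * (C 0 - A 0)) := by
    rw [hDi 0, hDi 1, hEi 0, hEi 1, hFi 0, hFi 1, hg]
    ring
  have hKval : K = |(B 0 - A 0) * (C 1 - A 1) - (B 1 - A 1) * (C 0 - A 0)| / 2 := by
    rw [hK, triArea_formula]
  have hDEF : triArea D E F = g * K := by
    rw [triArea_formula, key, abs_mul, abs_of_nonneg hgpos, hKval]
    ring
  rw [hDEF, hR]
  by_cases hK0 : K = 0
  · simp [hK0]
  · have hR0 : a * b * c / (4 * K) ≠ 0 := by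
      apply div_ne_zero (by positivity)
      simpa using hK0
    rw [hgval]
    field_simp
    ring


end Aux2
end

section
/- Let a, b, c be sides of a triangle and u the Yff parameter with u^3 = (a-u)(b-u)(c-u), 0 < u < min(a,b,c), and let s = (a+b+c)/2. Then u = s - a if and only if a^2(a - b - c) = bc(b + c - 3a). -/
theorem yff_nagel_condition (a b c u : ℝ)
    (ha : 0 < a) (hb : 0 < b) (hc : 0 < c)
    (hab : a < b + c) (hbc : b < a + c) (hca : c < a + b)
    (hu0 : 0 < u) (hu1 : u < min a (min b c))
    (hyff : u ^ 3 = (a - u) * (b - u) * (c - u)) :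
    u = (a + b + c) / 2 - a ↔
      a ^ 2 * (a - b - c) = b * c * (b + c - 3 * a) := by
  constructor
  · intro h
    subst h
    linear_combination (-2 : ℝ) * hyff
  · intro h
    set v : ℝ := (a + b + c) / 2 - a with hv
    have hfu : 2 * u ^ 3 - (a + b + c) * u ^ 2 + (a * b + b * c + c * a) * u - a * b * c = 0 := by
      linear_combination hyff
    have hfv : 2 * v ^ 3 - (a + b + c) * v ^ 2 + (a * b + b * c + c * a) * v - a * b * c = 0 := by
      rw [hv]; linear_combination (-1/2 : ℝ) * h
    have hQ : 0 < 2 * (u ^ 2 + u * v + v ^ 2) - (a + b + c) * (u + v) + (a * b + b * c + c * a) := by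
      have h1 : a ^ 2 < a * (b + c) := by nlinarith
      have h2 : b ^ 2 < b * (a + c) := by nlinarith
      have h3 : c ^ 2 < c * (a + b) := by nlinarith
      nlinarith [sq_nonneg (u + v - (a + b + c) / 3), sq_nonneg (u - v), sq_nonneg (u + v)]
    have key : (u - v) * (2 * (u ^ 2 + u * v + v ^ 2) - (a + b + c) * (u + v) + (a * b + b * c + c * a)) = 0 := by
      linear_combination hfu - hfv
    have := mul_eq_zero.mp key
    rcases this with h' | h'
    · linarith [sub_eq_zero.mp h']
    · linarith
end

section
/- In a triangle where the cevian BY1 is a median (so that u = b/2), the point Y1 divides the median BE in the ratio BY1 : Y1E = 2b : (2a - b). -/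
theorem yff_median_ratio (A B C : EuclideanSpace ℝ (Fin 2))
    (hABC : AffineIndependent ℝ ![A, B, C])
    (a b c u : ℝ)
    (ha : a = dist B C) (hb : b = dist C A) (hc : c = dist A B)
    (hu0 : 0 < u) (hu1 : u < min a (min b c))
    (hyff : u ^ 3 = (a - u) * (b - u) * (c - u))
    (hmed : u = b / 2) :
    let Y1 : EuclideanSpace ℝ (Fin 2) :=
      (u ^ 2 + (a - u) * (b - u) + u * (b - u))⁻¹ •
        (u ^ 2 • A + ((a - u) * (b - u)) • B + (u * (b - u)) • C)
    let E : EuclideanSpace ℝ (Fin 2) := midpoint ℝ A C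
    dist B Y1 / dist Y1 E = 2 * b / (2 * a - b) := by
  subst hmed
  intro Y1 E
  have hbpos : 0 < b := by linarith
  have hua : b / 2 < a := lt_of_lt_of_le hu1 (min_le_left _ _)
  have h2ab : 0 < 2 * a - b := by linarith
  have hapos : 0 < a := by linarith
  have hk : (2 * a + b) ≠ 0 := by positivity
  have hS : (b / 2) ^ 2 + (a - b / 2) * (b - b / 2) + b / 2 * (b - b / 2)
      = b * (2 * a + b) / 4 := by ring
  have h1 : Y1 - B = (2 * b / (2 * a + b)) • (E - B) := by
    show ((b / 2) ^ 2 + (a - b / 2) * (b - b / 2) + b / 2 * (b - b / 2))⁻¹ •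
        ((b / 2) ^ 2 • A + ((a - b / 2) * (b - b / 2)) • B + (b / 2 * (b - b / 2)) • C) - B
      = (2 * b / (2 * a + b)) • (midpoint ℝ A C - B)
    rw [hS, midpoint_eq_smul_add, invOf_eq_inv]
    match_scalars <;> field_simp <;> ring
  have h2 : Y1 - E = ((2 * a - b) / (2 * a + b)) • (B - E) := by
    show ((b / 2) ^ 2 + (a - b / 2) * (b - b / 2) + b / 2 * (b - b / 2))⁻¹ •
        ((b / 2) ^ 2 • A + ((a - b / 2) * (b - b / 2)) • B + (b / 2 * (b - b / 2)) • C)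
        - midpoint ℝ A C
      = ((2 * a - b) / (2 * a + b)) • (B - midpoint ℝ A C)
    rw [hS, midpoint_eq_smul_add, invOf_eq_inv]
    match_scalars <;> field_simp <;> ring
  have hBE : B ≠ E := by
    intro h
    have hcol : Collinear ℝ {B, A, C} :=
      collinear_insert_of_mem_affineSpan_pair (h ▸ (wbtw_midpoint ℝ A C).mem_affineSpan)
    rw [Set.insert_comm] at hcol
    exact (affineIndependent_iff_not_collinear_set.mp hABC) hcol
  have hn : 0 < ‖B - E‖ := by
    rw [norm_pos_iff]; exact sub_ne_zero.mpr hBE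
  have d1 : dist B Y1 = (2 * b / (2 * a + b)) * ‖B - E‖ := by
    rw [dist_eq_norm, ← norm_neg, neg_sub, h1, norm_smul, ← norm_neg (E - B), neg_sub]
    rw [Real.norm_eq_abs, abs_of_pos (by positivity)]
  have d2 : dist Y1 E = ((2 * a - b) / (2 * a + b)) * ‖B - E‖ := by
    rw [dist_eq_norm, h2, norm_smul, Real.norm_eq_abs, abs_of_pos (by positivity)]
  rw [d1, d2]
  rw [div_eq_div_iff (by positivity) (by linarith)]
  field_simp
end
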